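/- Suppose that for some constants s ≥ 0, δ ∈ [0,1], and K ≥ 0 the structural Nagaev–Bikelis inequality holds: for all n and all independent centered Xₖ with finite (2+δ)-th moments, sup_x (1+|x|^{2+δ})·|P(Sₙ < xBₙ) − Φ(x)| ≤ K·(L_{2+δ,n} + s·T_{2+δ,n}). Then for every p ∈ (0,1) with q = 1−p: K ≥ q^{δ/2}·(p^{1+δ/2} + q^{1+δ/2})/(p^{1+δ} + q^{1+δ} + s(pq)^{δ/2})·|1 − (1/p)·Φ(−√(q/p))|. -/

import Mathlib

open MeasureTheory ProbabilityTheory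
set_option maxRecDepth 8000

/-- The standard normal distribution function. -/
noncomputable def Phi (x : ℝ) : ℝ :=
  (Real.sqrt (2 * Real.pi))⁻¹ * ∫ t in Set.Iio x, Real.exp (-t ^ 2 / 2)

lemma gauss_integrable : Integrable (fun t : ℝ => Real.exp (-t ^ 2 / 2)) := by
  have := integrable_exp_neg_mul_sq (by norm_num : (0:ℝ) < 1/2)
  simpa [neg_div, mul_comm, div_eq_mul_inv, mul_comm] using this

lemma gauss_total : (∫ t : ℝ, Real.exp (-t ^ 2 / 2)) = Real.sqrt (2 * Real.pi) := by
  have := integral_gaussian (1/2 : ℝ)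
  rw [show Real.pi / (1/2) = 2 * Real.pi by ring] at this
  rw [← this]
  congr 1 with t
  ring_nf

lemma phi_add_phi_neg (x : ℝ) : Phi x + Phi (-x) = 1 := by
  have hint := gauss_integrable
  have h1 : (∫ t in Set.Iio (-x), Real.exp (-t ^ 2 / 2))
      = ∫ t in Set.Ioi x, Real.exp (-t ^ 2 / 2) := by
    rw [← integral_Iic_eq_integral_Iio, ← integral_comp_neg_Ioi]
    congr 1 with t
    ring_nf
  have h2 : (∫ t in Set.Iio x, Real.exp (-t ^ 2 / 2))
      = ∫ t in Set.Iic x, Real.exp (-t ^ 2 / 2) :=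
    (integral_Iic_eq_integral_Iio).symm
  have h3 := intervalIntegral.integral_Iic_add_Ioi (b := x)
    hint.integrableOn hint.integrableOn
  have hpos : (0:ℝ) < Real.sqrt (2 * Real.pi) :=
    Real.sqrt_pos.mpr (by positivity)
  unfold Phi
  rw [h1, h2, ← mul_add, h3, gauss_total, inv_mul_cancel₀ hpos.ne']

noncomputable def bmeas (p q : ℝ) : Measure Bool :=
  (ENNReal.ofReal p) • Measure.dirac true + (ENNReal.ofReal q) • Measure.dirac false

instance bfin (p q : ℝ) : IsFiniteMeasure (bmeas p q) := by
  constructor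
  unfold bmeas
  simp [lt_top_iff_ne_top, ENNReal.mul_ne_top]

lemma bool_integral (p q : ℝ) (hp : 0 ≤ p) (hq : 0 ≤ q) (f : Bool → ℝ) :
    ∫ ω, f ω ∂(bmeas p q) = p * f true + q * f false := by
  have h1 : IsFiniteMeasure ((ENNReal.ofReal p) • (Measure.dirac true : Measure Bool)) := by
    constructor; simp [lt_top_iff_ne_top, ENNReal.mul_ne_top]
  have h2 : IsFiniteMeasure ((ENNReal.ofReal q) • (Measure.dirac false : Measure Bool)) := by
    constructor; simp [lt_top_iff_ne_top, ENNReal.mul_ne_top]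
  unfold bmeas
  rw [integral_add_measure Integrable.of_finite Integrable.of_finite,
    integral_smul_measure, integral_smul_measure, integral_dirac, integral_dirac,
    ENNReal.toReal_ofReal hp, ENNReal.toReal_ofReal hq, smul_eq_mul, smul_eq_mul]

lemma bool_meas_false (p q : ℝ) : bmeas p q {false} = ENNReal.ofReal q := by
  unfold bmeas
  simp [Measure.dirac_apply]

/-- If constants `s ≥ 0`, `δ ∈ [0,1]`, `K ≥ 0` satisfy the structural
Nagaev–Bikelis inequality
`sup_x (1+|x|^{2+δ})·|P(Sₙ < xBₙ) − Φ(x)| ≤ K·(L_{2+δ,n} + s·T_{2+δ,n})`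
for all `n` and all independent centered `Xₖ` with finite `(2+δ)`-th moments,
then for every `p ∈ (0,1)`, `q = 1 − p`:
`K ≥ q^{δ/2}·(p^{1+δ/2}+q^{1+δ/2})/(p^{1+δ}+q^{1+δ}+s(pq)^{δ/2})·|1 − (1/p)Φ(−√(q/p))|`. -/
theorem nagaev_bikelis_const_lower_bound (s δ K : ℝ)
    (hs : 0 ≤ s) (hδ0 : 0 ≤ δ) (hδ1 : δ ≤ 1) (hK : 0 ≤ K)
    (hineq : ∀ (Ω : Type) (_ : MeasurableSpace Ω) (μ : Measure Ω),
      IsProbabilityMeasure μ →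
      ∀ (n : ℕ) (X : Fin n → Ω → ℝ),
      iIndepFun X μ →
      (∀ k, Measurable (X k)) →
      (∀ k, (∫ ω, X k ω ∂μ) = 0) →
      (∀ k, Integrable (fun ω => |X k ω| ^ (2 + δ)) μ) →
      ∀ Bn : ℝ, 0 < Bn → Bn ^ 2 = (∑ k, ∫ ω, (X k ω) ^ 2 ∂μ) →
      ∀ x : ℝ,
        (1 + |x| ^ (2 + δ)) * |(μ {ω | (∑ k, X k ω) < x * Bn}).toReal - Phi x| ≤
          K * ((∑ k, ∫ ω, |X k ω| ^ (2 + δ) ∂μ) / Bn ^ (2 + δ) +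
            s * ((∑ k, (∫ ω, (X k ω) ^ 2 ∂μ) ^ ((2 + δ) / 2)) / Bn ^ (2 + δ)))) :
    ∀ p : ℝ, p ∈ Set.Ioo (0 : ℝ) 1 →
      K ≥ (1 - p) ^ (δ / 2) *
          ((p ^ (1 + δ / 2) + (1 - p) ^ (1 + δ / 2)) /
            (p ^ (1 + δ) + (1 - p) ^ (1 + δ) + s * (p * (1 - p)) ^ (δ / 2))) *
          |1 - (1 / p) * Phi (-Real.sqrt ((1 - p) / p))| := by
  rintro p ⟨hp0, hp1⟩
  set q : ℝ := 1 - p with hqdef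
  have hq0 : 0 < q := by simp [hqdef]; linarith
  set a : ℝ := Real.sqrt (q / p) with hadef
  set b : ℝ := Real.sqrt (p / q) with hbdef
  have ha0 : 0 < a := Real.sqrt_pos.mpr (by positivity)
  have hb0 : 0 < b := Real.sqrt_pos.mpr (by positivity)
  set μ : Measure Bool := bmeas p q with hμdef
  have hprob : IsProbabilityMeasure μ := by
    constructor
    rw [hμdef]
    unfold bmeas
    simp [← ENNReal.ofReal_add hp0.le hq0.le, show p + q = 1 by simp [hqdef]]
  set X : Fin 1 → Bool → ℝ := fun _ ω => cond ω a (-b) with hXdef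
  -- square values
  have ha2 : a ^ 2 = q / p := Real.sq_sqrt (by positivity)
  have hb2 : b ^ 2 = p / q := Real.sq_sqrt (by positivity)
  -- rpow abbreviations
  set P : ℝ := p ^ (δ / 2 : ℝ) with hPdef
  set Q : ℝ := q ^ (δ / 2 : ℝ) with hQdef
  have hP0 : 0 < P := Real.rpow_pos_of_pos hp0 _
  have hQ0 : 0 < Q := Real.rpow_pos_of_pos hq0 _
  have hp1d : p ^ (1 + δ / 2 : ℝ) = p * P := by
    rw [Real.rpow_add hp0, Real.rpow_one]
  have hq1d : q ^ (1 + δ / 2 : ℝ) = q * Q := by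
    rw [Real.rpow_add hq0, Real.rpow_one]
  have hpδ : p ^ (1 + δ : ℝ) = p * (P * P) := by
    rw [Real.rpow_add hp0, Real.rpow_one, show (δ : ℝ) = δ/2 + δ/2 by ring,
      Real.rpow_add hp0]
  have hqδ : q ^ (1 + δ : ℝ) = q * (Q * Q) := by
    rw [Real.rpow_add hq0, Real.rpow_one, show (δ : ℝ) = δ/2 + δ/2 by ring,
      Real.rpow_add hq0]
  have hpqδ : (p * q) ^ (δ / 2 : ℝ) = P * Q := Real.mul_rpow hp0.le hq0.le
  have haδ : a ^ (2 + δ : ℝ) = q * Q / (p * P) := by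
    rw [hadef, Real.sqrt_eq_rpow, ← Real.rpow_mul (by positivity : (0:ℝ) ≤ q / p),
      show (1/2) * (2 + δ) = 1 + δ/2 by ring,
      Real.div_rpow hq0.le hp0.le, hp1d, hq1d]
  have hbδ : b ^ (2 + δ : ℝ) = p * P / (q * Q) := by
    rw [hbdef, Real.sqrt_eq_rpow, ← Real.rpow_mul (by positivity : (0:ℝ) ≤ p / q),
      show (1/2) * (2 + δ) = 1 + δ/2 by ring,
      Real.div_rpow hp0.le hq0.le, hp1d, hq1d]
  -- apply the hypothesis
  haveI := hprob
  have hindep : iIndepFun X μ := iIndepFun.of_subsingleton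
  have hmeas : ∀ k, Measurable (X k) := fun _ => measurable_of_countable _
  have hmean : ∀ k : Fin 1, (∫ ω, X k ω ∂μ) = 0 := by
    intro k
    have : X k = fun ω => cond ω a (-b) := rfl
    rw [this, hμdef, bool_integral p q hp0.le hq0.le]
    have h1 : p * a = Real.sqrt (p * q) := by
      rw [hadef, ← Real.sqrt_sq hp0.le, ← Real.sqrt_mul (sq_nonneg p)]
      congr 1
      field_simp
      rw [Real.sq_sqrt (sq_nonneg p)]
    have h2 : q * b = Real.sqrt (p * q) := by
      rw [hbdef, ← Real.sqrt_sq hq0.le, ← Real.sqrt_mul (sq_nonneg q)]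
      congr 1
      field_simp
      rw [Real.sq_sqrt (sq_nonneg q)]
    simp only [cond_true, cond_false]
    rw [mul_neg, h1, h2]
    ring
  have hint : ∀ k : Fin 1, Integrable (fun ω => |X k ω| ^ (2 + δ)) μ :=
    fun _ => Integrable.of_finite
  have hvar : (1:ℝ) ^ 2 = (∑ k : Fin 1, ∫ ω, (X k ω) ^ 2 ∂μ) := by
    rw [Fin.sum_univ_one]
    have : X 0 = fun ω => cond ω a (-b) := rfl
    rw [this, hμdef, bool_integral p q hp0.le hq0.le
      (fun ω => (cond ω a (-b)) ^ 2)]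
    simp only [cond_true, cond_false, neg_sq]
    rw [ha2, hb2]
    field_simp
    linarith
  have hx := hineq Bool inferInstance μ hprob 1 X hindep hmeas hmean hint 1
    one_pos hvar a
  -- simplify the event set
  have hset : {ω : Bool | (∑ k : Fin 1, X k ω) < a * 1} = {false} := by
    ext ω
    cases ω <;>
      simp [Fin.sum_univ_one, hXdef, lt_irrefl, lt_of_lt_of_le (neg_neg_iff_pos.mpr hb0) ha0.le]
  rw [hset, hμdef, bool_meas_false, ENNReal.toReal_ofReal hq0.le,
    Fin.sum_univ_one, Fin.sum_univ_one] at hx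
  have hXi : X 0 = fun ω => cond ω a (-b) := rfl
  rw [hXi, bool_integral p q hp0.le hq0.le (fun ω => |cond ω a (-b)| ^ (2+δ)),
    bool_integral p q hp0.le hq0.le (fun ω => (cond ω a (-b)) ^ 2)] at hx
  simp only [cond_true, cond_false, abs_neg, abs_of_pos ha0, abs_of_pos hb0,
    Real.one_rpow, neg_sq] at hx
  rw [haδ, hbδ, ha2, hb2] at hx
  have hvv : p * (q / p) + q * (p / q) = 1 := by
    field_simp
    linarith
  rw [hvv, Real.one_rpow] at hx
  -- relate Phi a and Phi (-a)
  have hphi : Phi a = 1 - Phi (-a) := by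
    have := phi_add_phi_neg a
    linarith
  set M : ℝ := |1 - (1 / p) * Phi (-a)| with hMdef
  have hc : p * (1 - (1 / p) * Phi (-a)) = p - Phi (-a) := by
    field_simp
  have habs : |q - Phi a| = p * M := by
    have h4 : q - Phi a = -(p * (1 - (1 / p) * Phi (-a))) := by
      rw [hphi, hc, hqdef]; ring
    rw [hMdef, h4, abs_neg, abs_mul, abs_of_pos hp0]
  rw [habs] at hx
  -- final algebra
  have hden : (0:ℝ) < (p * (q * Q / (p * P)) + q * (p * P / (q * Q))) / 1 + s * (1 / 1) :=
    add_pos_of_pos_of_nonneg (by positivity) (mul_nonneg hs (by norm_num))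
  rw [ge_iff_le, show q ^ (δ/2 : ℝ) *
      ((p ^ (1 + δ/2 : ℝ) + q ^ (1 + δ/2 : ℝ)) /
        (p ^ (1 + δ : ℝ) + q ^ (1 + δ : ℝ) + s * (p * q) ^ (δ/2 : ℝ))) * M
      = ((1 + q * Q / (p * P)) * (p * M)) /
        ((p * (q * Q / (p * P)) + q * (p * P / (q * Q))) / 1 + s * (1 / 1)) by
    rw [hp1d, hq1d, hpδ, hqδ, hpqδ, ← hQdef]
    have hD : (0:ℝ) < p * (P * P) + q * (Q * Q) + s * (P * Q) :=
      add_pos_of_pos_of_nonneg (by positivity) (mul_nonneg hs (by positivity))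
    field_simp
    ring]
  exact (div_le_iff₀ hden).mpr hx
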